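/- arXiv:1404.0671 — 7 statements merged into one kernel-verified Lean document; each statement's English description precedes it below -/
import Mathlib

section
/- The adjugate of the characteristic matrix λI - B̂ equals λ^{n-1} I + λ^{n-2} (B̂ - (∑_{i=1}^n b_i) I), as a polynomial identity in λ. -/
open Matrix Polynomial

section aux

variable {K : Type*} [Field K]

lemma sq_of_rows {n : ℕ} (b : Fin n → K) :
    ((Matrix.of fun i _ : Fin n => b i).map C) * ((Matrix.of fun i _ : Fin n => b i).map C)
      = C (∑ i, b i) • ((Matrix.of fun i _ : Fin n => b i).map C) := by
  apply Matrix.ext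
  intro i j
  simp [Matrix.mul_apply, Finset.mul_sum, map_sum, mul_comm]

lemma key_prod (m : ℕ) (b : Fin (m + 2) → K) :
    (((X : K[X]) ^ (m + 1) • (1 : Matrix (Fin (m+2)) (Fin (m+2)) K[X]) +
        (X : K[X]) ^ m •
          ((Matrix.of fun i _ : Fin (m+2) => b i).map C -
            C (∑ i, b i) • (1 : Matrix (Fin (m+2)) (Fin (m+2)) K[X]))) *
      charmatrix (Matrix.of fun i _ : Fin (m+2) => b i)) =
      ((X : K[X]) ^ (m + 2) - C (∑ i, b i) * (X : K[X]) ^ (m + 1)) •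
        (1 : Matrix (Fin (m+2)) (Fin (m+2)) K[X]) := by
  have hch : charmatrix (Matrix.of fun i _ : Fin (m+2) => b i) =
      (X : K[X]) • (1 : Matrix (Fin (m+2)) (Fin (m+2)) K[X]) -
        (Matrix.of fun i _ : Fin (m+2) => b i).map C := by
    rw [charmatrix, smul_one_eq_diagonal]; rfl
  set N := (Matrix.of fun i _ : Fin (m+2) => b i).map C with hNdef
  have hN : N * N = C (∑ i, b i) • N := sq_of_rows b
  rw [hch]
  simp only [add_mul, Matrix.smul_mul, Matrix.mul_smul, Matrix.one_mul, Matrix.mul_one,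
    Matrix.mul_sub, Matrix.sub_mul, Matrix.smul_mul, smul_sub, hN, smul_smul]
  rw [sub_smul]
  module

set_option synthInstance.maxHeartbeats 1000000 in
set_option maxHeartbeats 1000000 in
lemma det_char (m : ℕ) (b : Fin (m + 2) → K) :
    (charmatrix (Matrix.of fun i _ : Fin (m+2) => b i)).det =
      (X : K[X]) ^ (m + 2) - C (∑ i, b i) * (X : K[X]) ^ (m + 1) := by
  apply IsFractionRing.injective K[X] (RatFunc K)
  set φ := algebraMap K[X] (RatFunc K) with hφ
  set t : RatFunc K := φ X with ht
  have htne : t ≠ 0 := by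
    simpa [ht] using fun h => X_ne_zero (IsFractionRing.injective K[X] (RatFunc K)
      (by rw [map_zero]; exact h))
  rw [RingHom.map_det]
  have hmap : φ.mapMatrix (charmatrix (Matrix.of fun i _ : Fin (m+2) => b i)) =
      t • ((1 : Matrix (Fin (m+2)) (Fin (m+2)) (RatFunc K)) +
        Matrix.replicateCol Unit (fun i => -(t⁻¹ * φ (C (b i)))) *
          Matrix.replicateRow Unit (fun _ => (1 : RatFunc K))) := by
    ext i j
    by_cases h : i = j
    · simp only [h, RingHom.mapMatrix_apply, Matrix.map_apply, charmatrix_apply_eq,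
        Matrix.smul_apply, Matrix.add_apply, Matrix.one_apply_eq, Matrix.mul_apply,
        Matrix.replicateCol_apply, Matrix.replicateRow_apply, Finset.univ_unique, Finset.sum_singleton,
        map_sub, smul_eq_mul]
      field_simp
      rw [← ht, sub_eq_add_neg]
      rfl
    · simp only [RingHom.mapMatrix_apply, Matrix.map_apply, charmatrix_apply_ne _ _ _ h,
        Matrix.smul_apply, Matrix.add_apply, Matrix.one_apply_ne h, Matrix.mul_apply,
        Matrix.replicateCol_apply, Matrix.replicateRow_apply, Finset.univ_unique, Finset.sum_singleton,
        map_neg, smul_eq_mul, zero_add]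
      field_simp
      rfl
  rw [hmap, Matrix.det_smul, Matrix.det_one_add_replicateCol_mul_replicateRow]
  have hc : ∀ x : Fin (m+2), t^(m+2) * ((1:RatFunc K) * -(t⁻¹ * φ (C (b x)))) =
      -(t^(m+1) * φ (C (b x))) := by
    intro x; field_simp; ring
  simp only [dotProduct, Fintype.card_fin, mul_add, mul_one, Finset.mul_sum, hc,
    map_sub, map_pow, _root_.map_mul, map_sum, ← ht]
  rw [Finset.sum_neg_distrib, Finset.sum_mul]
  simp [mul_comm, sub_eq_add_neg]

end aux

theorem stmt7 {K : Type*} [Field K] (n : ℕ) (hn : 2 ≤ n) (b : Fin n → K) :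
    (Matrix.charmatrix (Matrix.of fun i _ : Fin n => b i)).adjugate =
      (X : K[X]) ^ (n - 1) • (1 : Matrix (Fin n) (Fin n) K[X]) +
        (X : K[X]) ^ (n - 2) •
          ((Matrix.of fun i _ : Fin n => b i).map C -
            C (∑ i, b i) • (1 : Matrix (Fin n) (Fin n) K[X])) := by
  obtain ⟨m, rfl⟩ : ∃ m, n = m + 2 := ⟨n - 2, by omega⟩
  have hm1 : m + 2 - 1 = m + 1 := rfl
  have hm2 : m + 2 - 2 = m := rfl
  rw [hm1, hm2]
  set M := charmatrix (Matrix.of fun i _ : Fin (m+2) => b i) with hM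
  set A := (X : K[X]) ^ (m + 1) • (1 : Matrix (Fin (m+2)) (Fin (m+2)) K[X]) +
        (X : K[X]) ^ m •
          ((Matrix.of fun i _ : Fin (m+2) => b i).map C -
            C (∑ i, b i) • (1 : Matrix (Fin (m+2)) (Fin (m+2)) K[X])) with hA
  set d : K[X] := (X : K[X]) ^ (m + 2) - C (∑ i, b i) * (X : K[X]) ^ (m + 1) with hd
  have h1 : A * M = d • 1 := key_prod m b
  have hdet : M.det = d := det_char m b
  have hdne : d ≠ 0 := by
    have : d = (X : K[X]) ^ (m+1) * (X - C (∑ i, b i)) := by rw [hd]; ring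
    rw [this]
    exact mul_ne_zero (pow_ne_zero _ X_ne_zero) (X_sub_C_ne_zero _)
  have key : d • M.adjugate = d • A := by
    calc d • M.adjugate = (d • (1 : Matrix (Fin (m+2)) (Fin (m+2)) K[X])) * M.adjugate := by
          rw [Matrix.smul_mul, Matrix.one_mul]
      _ = (A * M) * M.adjugate := by rw [h1]
      _ = A * (M * M.adjugate) := by rw [Matrix.mul_assoc]
      _ = A * (d • 1) := by rw [Matrix.mul_adjugate, hdet]
      _ = d • A := by rw [Matrix.mul_smul, Matrix.mul_one]
  apply Matrix.ext
  intro i j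
  have := congrFun (congrFun key i) j
  simp only [Matrix.smul_apply, smul_eq_mul] at this
  exact mul_left_cancel₀ hdne this
end

section
/- If ∑_{i=1}^n b_i ≠ 0, the explicit inverse of the modal matrix S is given by S^{-1} = -(1/∑ b_i) M, where M has rows: row k (1 ≤ k ≤ n-1) equals (b_{k+1}, ..., b_{k+1}) except entry in column k+1 which is -∑_{i≠k+1} b_i; and row n has all entries -1. -/
open Matrix

theorem stmt11 {K : Type*} [Field K] (n : ℕ) (hn : 2 ≤ n) (b : Fin n → K)
    (hs : ∑ i, b i ≠ 0)
    (S M : Matrix (Fin n) (Fin n) K)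
    (hS : S = Matrix.of fun i j : Fin n =>
        if (j : ℕ) = n - 1 then b i
        else if (i : ℕ) = 0 then (-1 : K)
        else if (i : ℕ) = (j : ℕ) + 1 then 1 else 0)
    (hM : M = Matrix.of fun k j : Fin n =>
        if (k : ℕ) = n - 1 then (-1 : K)
        else if (j : ℕ) = (k : ℕ) + 1 then
          -((∑ i, b i) - b ⟨min ((k : ℕ) + 1) (n - 1), by omega⟩)
        else b ⟨min ((k : ℕ) + 1) (n - 1), by omega⟩) :
    S * (-(∑ i, b i)⁻¹ • M) = 1 := by
  set s := ∑ i, b i with hsdef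
  have key : S * M = (-s) • (1 : Matrix (Fin n) (Fin n) K) := by
    obtain ⟨m, rfl⟩ : ∃ m, n = m + 1 := ⟨n - 1, by omega⟩
    have hm : 1 ≤ m := by omega
    have hsplit : s = b ⟨0, by omega⟩ + ∑ k : Fin m, b ⟨(k : ℕ) + 1, by omega⟩ := by
      rw [hsdef, Fin.sum_univ_succ]
      congr 1
    ext i j
    rw [hS, hM, mul_apply, Fin.sum_univ_castSucc]
    have hsub : m + 1 - 1 = m := rfl
    simp only [Matrix.of_apply, Fin.coe_castSucc, hsub, Fin.val_last,
      eq_self_iff_true, ite_true]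
    have hne : ∀ k : Fin m, (k : ℕ) ≠ m := fun k => Nat.ne_of_lt k.isLt
    have hmin : ∀ k : Fin m, min ((k : ℕ) + 1) m = (k : ℕ) + 1 :=
      fun k => min_eq_left k.isLt
    have h1 : (-s • (1 : Matrix (Fin (m+1)) (Fin (m+1)) K)) i j
        = if i = j then -s else 0 := by
      rw [Matrix.smul_apply, Matrix.one_apply]
      split <;> simp
    rw [h1]
    rcases Nat.eq_zero_or_pos (i : ℕ) with hi | hi
    · -- row 0
      have hi0 : i = ⟨0, by omega⟩ := Fin.ext hi
      have hsum : ∑ k : Fin m,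
          (if ((k : ℕ) : ℕ) = m then b i else if (i:ℕ) = 0 then (-1:K)
            else if (i:ℕ) = (k:ℕ)+1 then 1 else 0) *
          (if (k:ℕ) = m then (-1:K) else if (j:ℕ) = (k:ℕ)+1 then
            -(s - b ⟨min ((k:ℕ)+1) m, by omega⟩) else b ⟨min ((k:ℕ)+1) m, by omega⟩)
          = ∑ k : Fin m, ((- b ⟨(k:ℕ)+1, by omega⟩) +
              (if (j:ℕ) = (k:ℕ)+1 then s else 0)) := by
        refine Finset.sum_congr rfl fun k _ => ?_
        rw [if_neg (hne k), if_neg (hne k), if_pos hi]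
        simp only [hmin k]
        by_cases h : (j:ℕ) = (k:ℕ)+1 <;> simp [h] <;> ring
      rw [hsum, Finset.sum_add_distrib, Finset.sum_neg_distrib]
      rcases Nat.eq_zero_or_pos (j : ℕ) with hj | hj
      · have hij : i = j := Fin.ext (by omega)
        rw [if_pos hij]
        have hz : ∑ k : Fin m, (if (j:ℕ) = (k:ℕ)+1 then s else 0) = 0 := by
          apply Finset.sum_eq_zero
          intro k _
          rw [if_neg (by omega)]
        rw [hz, hi0]
        linear_combination hsplit
      · have hij : ¬ i = j := by
          intro h; rw [h] at hi; omega
        rw [if_neg hij]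
        have hjlt : (j:ℕ) - 1 < m := by omega
        have hz : ∑ k : Fin m, (if (j:ℕ) = (k:ℕ)+1 then s else 0) = s := by
          have : ∀ k : Fin m, (if (j:ℕ) = (k:ℕ)+1 then s else (0:K))
              = if k = ⟨(j:ℕ)-1, hjlt⟩ then s else 0 := by
            intro k
            congr 1
            simp only [Fin.ext_iff, eq_iff_iff]
            constructor <;> intro h <;> omega
          rw [Finset.sum_congr rfl fun k _ => this k, Finset.sum_ite_eq']
          simp
        rw [hz, hi0]
        linear_combination hsplit
    · -- row i ≥ 1
      have hilt : (i:ℕ) - 1 < m := by omega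
      have hsum : ∑ k : Fin m,
          (if ((k : ℕ) : ℕ) = m then b i else if (i:ℕ) = 0 then (-1:K)
            else if (i:ℕ) = (k:ℕ)+1 then 1 else 0) *
          (if (k:ℕ) = m then (-1:K) else if (j:ℕ) = (k:ℕ)+1 then
            -(s - b ⟨min ((k:ℕ)+1) m, by omega⟩) else b ⟨min ((k:ℕ)+1) m, by omega⟩)
          = if (j:ℕ) = (i:ℕ) then -(s - b i) else b i := by
        have step : ∀ k : Fin m,
            (if ((k : ℕ) : ℕ) = m then b i else if (i:ℕ) = 0 then (-1:K)
              else if (i:ℕ) = (k:ℕ)+1 then 1 else 0) *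
            (if (k:ℕ) = m then (-1:K) else if (j:ℕ) = (k:ℕ)+1 then
              -(s - b ⟨min ((k:ℕ)+1) m, by omega⟩) else b ⟨min ((k:ℕ)+1) m, by omega⟩)
            = if k = ⟨(i:ℕ)-1, hilt⟩ then
                (if (j:ℕ) = (i:ℕ) then -(s - b i) else b i) else 0 := by
          intro k
          rw [if_neg (hne k), if_neg (hne k), if_neg (by omega)]
          by_cases h : (i:ℕ) = (k:ℕ)+1
          · have hk : k = ⟨(i:ℕ)-1, hilt⟩ := Fin.ext (by simp; omega)
            have hb : (⟨min ((k:ℕ)+1) m, by omega⟩ : Fin (m+1)) = i :=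
              Fin.ext (by simp only [hmin k]; omega)
            rw [if_pos h, one_mul, hb, if_pos hk, ← h]
          · have hk : ¬ k = ⟨(i:ℕ)-1, hilt⟩ := by
              intro hk; apply h; rw [hk]; simp; omega
            rw [if_neg h, zero_mul, if_neg hk]
        rw [Finset.sum_congr rfl fun k _ => step k, Finset.sum_ite_eq']
        simp
      rw [hsum]
      by_cases h : (j:ℕ) = (i:ℕ)
      · rw [if_pos h, if_pos (Fin.ext h.symm)]
        ring
      · rw [if_neg h, if_neg (fun hh => h (congrArg Fin.val hh.symm))]
        ring
  have h2 : S * (-(s)⁻¹ • M) = -(s)⁻¹ • (S * M) := Matrix.mul_smul ..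
  rw [h2, key, smul_smul]
  rw [show -s⁻¹ * -s = s⁻¹ * s by ring, inv_mul_cancel₀ hs, one_smul]
end

section
/- If ∑_{i=1}^n b_i = 0 and b_n ≠ 0, then the matrix B̂ is similar to the matrix with a single 2×2 nilpotent Jordan block: with T the matrix whose columns are v_1, ..., v_{n-2} (kernel vectors), (b_1, ..., b_n)^T, and e_1, we have T^{-1} B̂ T equal to the matrix that is zero except for a 1 in position (n-1, n). -/
open Matrix

theorem stmt12 {K : Type*} [Field K] (n : ℕ) (hn : 2 ≤ n) (b : Fin n → K)
    (hs : ∑ i, b i = 0) (hb : b ⟨n - 1, by omega⟩ ≠ 0)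
    (T : Matrix (Fin n) (Fin n) K)
    (hT : T = Matrix.of fun i j : Fin n =>
        if (j : ℕ) = n - 1 then (if (i : ℕ) = 0 then 1 else 0)
        else if (j : ℕ) = n - 2 then b i
        else if (i : ℕ) = 0 then (-1 : K)
        else if (i : ℕ) = (j : ℕ) + 1 then 1 else 0) :
    IsUnit T.det ∧
      T⁻¹ * (Matrix.of fun i _ : Fin n => b i) * T =
        Matrix.of (fun i j : Fin n =>
          if (i : ℕ) = n - 2 ∧ (j : ℕ) = n - 1 then (1 : K) else 0) := by
  have hn0 : 0 < n := by omega
  -- sum of a function supported at a single (ℕ-indexed) point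
  have sum_single : ∀ (p : ℕ) (hp : p < n) (f : Fin n → K),
      (∑ m : Fin n, if (m : ℕ) = p then f m else 0) = f ⟨p, hp⟩ := by
    intro p hp f
    have : ∀ m : Fin n, (if (m : ℕ) = p then f m else 0)
        = if m = (⟨p, hp⟩ : Fin n) then f m else 0 := by
      intro m
      congr 1
      simp [Fin.ext_iff]
    rw [Finset.sum_congr rfl fun m _ => this m, Finset.sum_ite_eq']
    simp
  -- helper: b extended to ℕ
  set c : ℕ → K := fun m => if h : m < n then b ⟨m, h⟩ else 0 with hc
  have hcN1 : c (n - 1) ≠ 0 := by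
    simpa [hc, Nat.sub_lt hn0] using hb
  have hcval : ∀ (m : Fin n), c (m : ℕ) = b m := by
    intro m; simp [hc, m.isLt]
  -- the explicit left inverse
  set S : Matrix (Fin n) (Fin n) K := Matrix.of (fun j k : Fin n =>
    if (j : ℕ) = n - 1 then 1
    else if (j : ℕ) = n - 2 then (if (k : ℕ) = n - 1 then (c (n - 1))⁻¹ else 0)
    else (if (k : ℕ) = (j : ℕ) + 1 then (1 : K) else 0)
      - (if (k : ℕ) = n - 1 then c ((j : ℕ) + 1) * (c (n - 1))⁻¹ else 0)) with hS
  -- values of T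
  have hTval : ∀ (i k : Fin n), T i k =
      if (k : ℕ) = n - 1 then (if (i : ℕ) = 0 then 1 else 0)
      else if (k : ℕ) = n - 2 then b i
      else if (i : ℕ) = 0 then (-1 : K)
      else if (i : ℕ) = (k : ℕ) + 1 then 1 else 0 := by
    intro i k; rw [hT]; rfl
  -- column sums of T
  have colsum : ∀ k : Fin n, (∑ m, T m k) = if (k : ℕ) = n - 1 then 1 else 0 := by
    intro k
    by_cases hk1 : (k : ℕ) = n - 1
    · rw [if_pos hk1]
      have : ∀ m : Fin n, T m k = if (m : ℕ) = 0 then (1 : K) else 0 := by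
        intro m; rw [hTval, if_pos hk1]
      rw [Finset.sum_congr rfl fun m _ => this m, sum_single 0 hn0]
    · by_cases hk2 : (k : ℕ) = n - 2
      · have : ∀ m : Fin n, T m k = b m := by
          intro m; rw [hTval, if_neg hk1, if_pos hk2]
        rw [Finset.sum_congr rfl fun m _ => this m, hs, if_neg hk1]
      · have hklt : (k : ℕ) + 1 < n - 1 := by
          have := k.isLt; omega
        have : ∀ m : Fin n, T m k =
            (if (m : ℕ) = 0 then (-1 : K) else 0)
            + (if (m : ℕ) = (k : ℕ) + 1 then (1 : K) else 0) := by
          intro m; rw [hTval, if_neg hk1, if_neg hk2]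
          split_ifs with h1 h2 h3 <;> first | ring1 | (exfalso; omega)
        rw [Finset.sum_congr rfl fun m _ => this m, Finset.sum_add_distrib,
          sum_single 0 hn0, sum_single ((k : ℕ) + 1) (by omega), if_neg hk1]
        norm_num
  -- S is a left inverse of T
  have hST : S * T = 1 := by
    ext j k
    rw [Matrix.mul_apply]
    by_cases hj1 : (j : ℕ) = n - 1
    · -- row of all ones: column sum
      have : ∀ m : Fin n, S j m * T m k = T m k := by
        intro m; rw [hS]; simp [Matrix.of_apply, hj1]
      rw [Finset.sum_congr rfl fun m _ => this m, colsum k, Matrix.one_apply]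
      have heq : (j = k) ↔ ((k : ℕ) = n - 1) := by
        rw [Fin.ext_iff]; omega
      simp only [heq]
    · by_cases hj2 : (j : ℕ) = n - 2
      · -- single entry at m = n-1
        have : ∀ m : Fin n, S j m * T m k =
            if (m : ℕ) = n - 1 then (c (n - 1))⁻¹ * T m k else 0 := by
          intro m; rw [hS]
          simp only [Matrix.of_apply]
          rw [if_neg hj1, if_pos hj2]
          split_ifs with h1 <;> simp
        rw [Finset.sum_congr rfl fun m _ => this m, sum_single (n - 1) (by omega)]
        have hTn1 : T (⟨n - 1, by omega⟩ : Fin n) k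
            = if (k : ℕ) = n - 2 then c (n - 1) else 0 := by
          rw [hTval]
          simp only [Fin.val_mk]
          split_ifs <;> first | rfl | (exfalso; first | omega | assumption) | exact (hcval _).symm
        rw [hTn1]
        rw [Matrix.one_apply]
        have heq : (j = k) ↔ ((k : ℕ) = n - 2) := by
          rw [Fin.ext_iff]; omega
        simp only [heq]
        split_ifs with h1
        · exact inv_mul_cancel₀ hcN1
        · exact mul_zero _
      · -- generic row: entries at m = j+1 and m = n-1
        have hjlt : (j : ℕ) + 1 < n - 1 := by have := j.isLt; omega
        have : ∀ m : Fin n, S j m * T m k =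
            (if (m : ℕ) = (j : ℕ) + 1 then T m k else 0)
            + (if (m : ℕ) = n - 1 then (-(c ((j : ℕ) + 1) * (c (n - 1))⁻¹)) * T m k else 0) := by
          intro m; rw [hS]
          simp only [Matrix.of_apply]
          rw [if_neg hj1, if_neg hj2]
          split_ifs with h1 h2 <;> first | ring1 | (exfalso; omega)
        rw [Finset.sum_congr rfl fun m _ => this m, Finset.sum_add_distrib,
          sum_single ((j : ℕ) + 1) (by omega), sum_single (n - 1) (by omega)]
        have hT1 : T (⟨(j : ℕ) + 1, by omega⟩ : Fin n) k
            = if (k : ℕ) = n - 2 then c ((j : ℕ) + 1)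
              else if (k : ℕ) = (j : ℕ) then 1 else 0 := by
          rw [hTval]
          simp only [Fin.val_mk]
          split_ifs <;> first | rfl | (exfalso; first | omega | assumption) | exact (hcval _).symm
        have hT2 : T (⟨n - 1, by omega⟩ : Fin n) k
            = if (k : ℕ) = n - 2 then c (n - 1) else 0 := by
          rw [hTval]
          simp only [Fin.val_mk]
          split_ifs <;> first | rfl | (exfalso; first | omega | assumption) | exact (hcval _).symm
        rw [hT1, hT2, Matrix.one_apply]
        have heq : (j = k) ↔ ((k : ℕ) = (j : ℕ)) := by
          rw [Fin.ext_iff]; omega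
        simp only [heq]
        split_ifs with h1 h2 h3
        · exfalso; omega
        · rw [neg_mul, mul_assoc, inv_mul_cancel₀ hcN1, mul_one]; ring
        · ring
        · ring
  have hdet : IsUnit T.det := by
    exact Matrix.isUnit_det_of_left_inverse hST
  refine ⟨hdet, ?_⟩
  -- commutation: B̂ * T = T * J
  have hBT : (Matrix.of fun i _ : Fin n => b i) * T
      = T * Matrix.of (fun i j : Fin n =>
          if (i : ℕ) = n - 2 ∧ (j : ℕ) = n - 1 then (1 : K) else 0) := by
    ext i k
    rw [Matrix.mul_apply, Matrix.mul_apply]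
    have hL : ∀ m : Fin n, (Matrix.of fun i _ : Fin n => b i) i m * T m k = b i * T m k := by
      intro m; rfl
    rw [Finset.sum_congr rfl fun m _ => hL m, ← Finset.mul_sum, colsum k]
    have hR : ∀ m : Fin n, T i m * Matrix.of (fun i j : Fin n =>
        if (i : ℕ) = n - 2 ∧ (j : ℕ) = n - 1 then (1 : K) else 0) m k
        = if (m : ℕ) = n - 2 then (if (k : ℕ) = n - 1 then T i m else 0) else 0 := by
      intro m
      simp only [Matrix.of_apply]
      by_cases hm : (m : ℕ) = n - 2 <;> by_cases hk' : (k : ℕ) = n - 1 <;>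
        simp [hm, hk']
    rw [Finset.sum_congr rfl fun m _ => hR m, sum_single (n - 2) (by omega)]
    have hTN2 : T i (⟨n - 2, by omega⟩ : Fin n) = b i := by
      rw [hTval]
      simp only [Fin.val_mk]
      split_ifs <;> first | rfl | (exfalso; omega)
    rw [hTN2]
    split_ifs <;> ring
  rw [mul_assoc, hBT, ← mul_assoc, Matrix.nonsing_inv_mul T hdet, one_mul]
end

section
/- Let A be a linear operator on a vector space V over K, B ∈ K^{n×n}, and x_1,...,x_n, φ_1,...,φ_n ∈ V satisfying A(x_i) = ∑_j B_{ij} x_j + φ_i for all i. If B_0, ..., B_{n-1} are the coefficients of adj(λI - B) (so adj(λI - B) = ∑_{k=1}^n B_{k-1} λ^{n-k}), then Δ_B(A)(x⃗) = ∑_{k=1}^n B_{k-1} A^{n-k}(φ⃗), where Δ_B is the characteristic polynomial of B applied to A componentwise. -/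
open Matrix Polynomial

theorem stmt14 {K : Type*} [Field K] {V : Type*} [AddCommGroup V] [Module K V]
    (A : V →ₗ[K] V) (n : ℕ) (hn : 1 ≤ n)
    (B : Matrix (Fin n) (Fin n) K) (x φ : Fin n → V)
    (hsys : ∀ i, A (x i) = ∑ j, B i j • x j + φ i)
    (Bk : Fin n → Matrix (Fin n) (Fin n) K)
    (hB : (Matrix.charmatrix B).adjugate =
        ∑ k : Fin n, (X : K[X]) ^ (n - 1 - (k : ℕ)) • (Bk k).map C) :
    ∀ i, (Polynomial.aeval A B.charpoly) (x i) =
      ∑ k : Fin n, ∑ j, Bk k i j • ((A ^ (n - 1 - (k : ℕ))) (φ j)) := by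
  intro i
  -- action of a polynomial matrix on a vector of V's
  set act : Matrix (Fin n) (Fin n) K[X] → (Fin n → V) → (Fin n → V) :=
    fun P w i => ∑ j, (Polynomial.aeval A (P i j)) (w j) with hact
  have hmul : ∀ (P Q : Matrix (Fin n) (Fin n) K[X]) (w : Fin n → V),
      act (P * Q) w = act P (act Q w) := by
    intro P Q w
    funext a
    simp only [hact, Matrix.mul_apply, map_sum, LinearMap.coe_sum,
      Finset.sum_apply, _root_.map_mul, Module.End.mul_apply]
    rw [Finset.sum_comm]
  have h1 : act (charmatrix B) x = φ := by
    funext a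
    simp only [hact, charmatrix_apply, Matrix.diagonal_apply, map_sub]
    have : ∀ j, (Polynomial.aeval A (if a = j then (X : K[X]) else 0) -
        Polynomial.aeval A (C (B a j))) (x j)
        = (if a = j then A (x j) else 0) - B a j • x j := by
      intro j
      by_cases h : a = j <;>
        simp [h, aeval_C, Module.algebraMap_end_apply]
    simp only [this, Finset.sum_sub_distrib, Finset.sum_ite_eq, Finset.mem_univ,
      if_true]
    have := hsys a
    rw [this]
    abel
  have h2 : (charmatrix B).adjugate * charmatrix B =
      (charpoly B) • (1 : Matrix (Fin n) (Fin n) K[X]) := by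
    rw [Matrix.adjugate_mul, Matrix.charpoly]
  have h3 : act ((charpoly B) • (1 : Matrix (Fin n) (Fin n) K[X])) x i
      = (Polynomial.aeval A B.charpoly) (x i) := by
    simp only [hact, Matrix.smul_apply, Matrix.one_apply, smul_eq_mul, mul_ite,
      mul_one, mul_zero]
    rw [Finset.sum_eq_single i]
    · simp
    · intro b _ hb
      simp [Ne.symm hb]
    · simp
  calc (Polynomial.aeval A B.charpoly) (x i)
      = act ((charpoly B) • (1 : Matrix (Fin n) (Fin n) K[X])) x i := h3.symm
    _ = act ((charmatrix B).adjugate * charmatrix B) x i := by rw [h2]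
    _ = act (charmatrix B).adjugate (act (charmatrix B) x) i := by rw [hmul]
    _ = act (charmatrix B).adjugate φ i := by rw [h1]
    _ = ∑ k : Fin n, ∑ j, Bk k i j • ((A ^ (n - 1 - (k : ℕ))) (φ j)) := by
        have key : ∀ (m : ℕ) (c : K) (v : V),
            (Polynomial.aeval A ((X : K[X]) ^ m * C c)) v = c • (A ^ m) v := by
          intro m c v
          rw [_root_.map_mul, aeval_X_pow, aeval_C, Module.End.mul_apply,
            Module.algebraMap_end_apply, LinearMap.map_smul]
        simp only [hact, hB, Matrix.sum_apply, Matrix.smul_apply,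
          Matrix.map_apply, smul_eq_mul, map_sum, LinearMap.coe_sum,
          Finset.sum_apply, key]
        rw [Finset.sum_comm]
end

section
/- Let A be a linear operator on V and suppose A(x_i) = b_i(x_1 + ... + x_n) + φ_i for all 1 ≤ i ≤ n, where b_i ∈ K and φ_i ∈ V. Then for each j, with s = ∑_i b_i: A^n(x_j) - s·A^{n-1}(x_j) = A^{n-1}(φ_j) + ∑_{i≠j} (b_j A^{n-2}(φ_i) - b_i A^{n-2}(φ_j)). -/
theorem stmt15 {K : Type*} [Field K] {V : Type*} [AddCommGroup V] [Module K V]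
    (A : V →ₗ[K] V) (n : ℕ) (hn : 2 ≤ n) (b : Fin n → K) (x φ : Fin n → V)
    (hsys : ∀ i, A (x i) = b i • (∑ j, x j) + φ i) :
    ∀ j, (A ^ n) (x j) - (∑ i, b i) • (A ^ (n - 1)) (x j) =
      (A ^ (n - 1)) (φ j) +
        ∑ i ∈ Finset.univ.erase j,
          (b j • (A ^ (n - 2)) (φ i) - b i • (A ^ (n - 2)) (φ j)) := by
  obtain ⟨c, rfl⟩ : ∃ c, n = c + 2 := ⟨n - 2, by omega⟩
  intro j
  have hS : A (∑ j, x j) = (∑ i, b i) • (∑ j, x j) + ∑ i, φ i := by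
    rw [map_sum]
    simp only [hsys]
    rw [Finset.sum_add_distrib, ← Finset.sum_smul]
  have key : A (A (x j)) - (∑ i, b i) • A (x j) =
      A (φ j) + ∑ i ∈ Finset.univ.erase j, (b j • φ i - b i • φ j) := by
    rw [hsys j, map_add, map_smul, hS, Finset.sum_sub_distrib, ← Finset.smul_sum,
      ← Finset.sum_smul, Finset.sum_erase_eq_sub (Finset.mem_univ j),
      Finset.sum_erase_eq_sub (Finset.mem_univ j)]
    module
  have hrw : ∀ v : V, (A ^ (c + 2)) v = (A ^ c) (A (A v)) := by
    intro v
    rw [pow_succ, pow_succ, Module.End.mul_apply, Module.End.mul_apply]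
  have hrw1 : ∀ v : V, (A ^ (c + 1)) v = (A ^ c) (A v) := by
    intro v
    rw [pow_succ, Module.End.mul_apply]
  show (A ^ (c + 2)) (x j) - (∑ i, b i) • (A ^ (c + 1)) (x j) =
      (A ^ (c + 1)) (φ j) +
        ∑ i ∈ Finset.univ.erase j, (b j • (A ^ c) (φ i) - b i • (A ^ c) (φ j))
  rw [hrw, hrw1, hrw1, ← map_smul, ← map_sub, key, map_add, map_sum]
  simp [map_sub, map_smul]
end

section
/- Let A be a linear operator on V and suppose A(x_i) = ∑_{j=1}^n b_j x_j + φ_i for all 1 ≤ i ≤ n (every equation has the same linear combination on the right). Then for each j, with s = ∑_i b_i: A^n(x_j) - s·A^{n-1}(x_j) = A^{n-1}(φ_j) + ∑_{i≠j} b_i (A^{n-2}(φ_i) - A^{n-2}(φ_j)). -/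
theorem stmt16 {K : Type*} [Field K] {V : Type*} [AddCommGroup V] [Module K V]
    (A : V →ₗ[K] V) (n : ℕ) (hn : 2 ≤ n) (b : Fin n → K) (x φ : Fin n → V)
    (hsys : ∀ i, A (x i) = (∑ j, b j • x j) + φ i) :
    ∀ j, (A ^ n) (x j) - (∑ i, b i) • (A ^ (n - 1)) (x j) =
      (A ^ (n - 1)) (φ j) +
        ∑ i ∈ Finset.univ.erase j,
          b i • ((A ^ (n - 2)) (φ i) - (A ^ (n - 2)) (φ j)) := by
  intro j
  obtain ⟨m, rfl⟩ : ∃ m, n = m + 2 := ⟨n - 2, by omega⟩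
  have h1 : m + 2 - 1 = m + 1 := rfl
  have h2 : m + 2 - 2 = m := rfl
  rw [h1, h2]
  have hc : ∀ (k : ℕ) (v : V), (A ^ k) (A v) = A ((A ^ k) v) := fun k v => by
    rw [← Module.End.mul_apply, ← Module.End.mul_apply, ← pow_succ, ← pow_succ']
  have hdiff : ∀ i : Fin (m + 2), A (x i - x j) = φ i - φ j := by
    intro i
    rw [map_sub, hsys i, hsys j]
    abel
  have key : A (x j) - (∑ i, b i) • x j = (∑ i, b i • (x i - x j)) + φ j := by
    rw [hsys j]
    simp only [smul_sub, Finset.sum_sub_distrib, ← Finset.sum_smul]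
    abel
  calc (A ^ (m + 2)) (x j) - (∑ i, b i) • (A ^ (m + 1)) (x j)
      = (A ^ (m + 1)) (A (x j) - (∑ i, b i) • x j) := by
        rw [map_sub, map_smul, pow_succ', Module.End.mul_apply, hc]
    _ = (A ^ (m + 1)) ((∑ i, b i • (x i - x j)) + φ j) := by rw [key]
    _ = (A ^ m) (A ((∑ i, b i • (x i - x j)) + φ j)) := by
        rw [pow_succ', Module.End.mul_apply, hc]
    _ = (A ^ m) ((∑ i, b i • (φ i - φ j)) + A (φ j)) := by
        congr 1
        rw [map_add, map_sum]
        congr 1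
        exact Finset.sum_congr rfl fun i _ => by rw [map_smul, hdiff i]
    _ = (∑ i, b i • ((A ^ m) (φ i) - (A ^ m) (φ j))) + (A ^ (m + 1)) (φ j) := by
        rw [map_add, map_sum, pow_succ', Module.End.mul_apply, hc]
        congr 1
        exact Finset.sum_congr rfl fun i _ => by rw [map_smul, map_sub]
    _ = (A ^ (m + 1)) (φ j) +
        ∑ i ∈ Finset.univ.erase j, b i • ((A ^ m) (φ i) - (A ^ m) (φ j)) := by
        rw [add_comm]
        congr 1
        rw [← Finset.add_sum_erase _ _ (Finset.mem_univ j)]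
        simp
end

section
/- The determinant of the n×n doubly companion matrix C(α, β), built from monic polynomials α(λ) = λ^n + a_1 λ^{n-1} + ... + a_n and β(λ) = λ^n + b_1 λ^{n-1} + ... + b_n (first row -a_1, ..., -a_{n-1}, -a_n - b_n; subdiagonal of ones; last column -b_{n-1}, ..., -b_1 below the first row), equals (-1)^n (a_n + b_n + ∑_{k=1}^{n-1} a_k b_{n-k}). -/
open Matrix

lemma hv_aux (p : ℕ) (r : Fin (p+2)) :
    (((1:Fin (p+3)).succAbove r : Fin (p+3)) : ℕ) = if (r:ℕ) = 0 then 0 else (r:ℕ)+1 := by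
  simp only [Fin.succAbove, Fin.lt_def, Fin.coe_castSucc, Fin.val_one, Fin.val_succ]
  split_ifs <;> simp_all

theorem key18 {K : Type*} [Field K] : ∀ (n : ℕ), 2 ≤ n → ∀ (a b : ℕ → K),
    (Matrix.of fun i j : Fin n =>
        if (i : ℕ) = 0 then
          (if (j : ℕ) = n - 1 then -a n - b n else -a ((j : ℕ) + 1))
        else if (i : ℕ) = (j : ℕ) + 1 then (1 : K)
        else if (j : ℕ) = n - 1 then -b (n - (i : ℕ))
        else 0).det =
      (-1) ^ n * (a n + b n + ∑ k ∈ Finset.Icc 1 (n - 1), a k * b (n - k)) := by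
  intro n hn
  induction n, hn using Nat.le_induction with
  | base =>
    intro a b
    rw [Matrix.det_fin_two]
    simp [Finset.Icc_self]
    ring
  | succ m hm ih =>
    intro a b
    obtain ⟨p, rfl⟩ : ∃ p, m = p + 2 := ⟨m - 2, by omega⟩
    set M : Matrix (Fin (p+3)) (Fin (p+3)) K := Matrix.of fun i j : Fin (p+3) =>
        if (i : ℕ) = 0 then
          (if (j : ℕ) = p + 2 + 1 - 1 then -a (p+2+1) - b (p+2+1) else -a ((j : ℕ) + 1))
        else if (i : ℕ) = (j : ℕ) + 1 then (1 : K)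
        else if (j : ℕ) = p + 2 + 1 - 1 then -b (p + 2 + 1 - (i : ℕ))
        else 0 with hM
    have d0 : (M.submatrix (Fin.succAbove 0) Fin.succ).det
        = (-1) ^ (p+2) * ((0:K) + b (p+2) + ∑ k ∈ Finset.Icc 1 (p + 2 - 1), (0:K) * b (p + 2 - k)) := by
      rw [← ih (fun _ => (0:K)) b]
      congr 1
      ext r c
      simp only [Matrix.submatrix_apply, Matrix.of_apply, hM, Fin.succAbove_zero, Fin.val_succ]
      rcases Nat.eq_zero_or_pos (r : ℕ) with h0 | h0
      · have hc : (r:ℕ) + 1 ≠ (c:ℕ) + 1 + 1 := by omega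
        rcases eq_or_ne (c:ℕ) (p+1) with hc1 | hc1
        · simp [h0, hc, hc1]
        · simp [h0, hc, hc1, show (c:ℕ)+1 ≠ p+2+1-1 by omega, show (c:ℕ) ≠ p+2-1 by omega]
      · have hr : (r:ℕ) + 1 ≠ 0 := by omega
        rcases eq_or_ne (r:ℕ) ((c:ℕ)+1) with he | he
        · simp [hr, he, show (r:ℕ) ≠ 0 by omega]
        · rcases eq_or_ne (c:ℕ) (p+1) with hc1 | hc1
          · have h3 : p + 2 + 1 - ((r:ℕ)+1) = p + 2 - (r:ℕ) := by omega
            simp [hr, he, hc1, show (r:ℕ) ≠ 0 by omega, show (r:ℕ)+1 ≠ (c:ℕ)+1+1 by omega, h3]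
          · simp [hr, he, hc1, show (r:ℕ) ≠ 0 by omega, show (r:ℕ)+1 ≠ (c:ℕ)+1+1 by omega,
              show (c:ℕ)+1 ≠ p+2+1-1 by omega, show (c:ℕ) ≠ p+2-1 by omega]
    have d1 : (M.submatrix (Fin.succAbove 1) Fin.succ).det
        = (-1) ^ (p+2) * ((a (p+3) + b (p+3) - b (p+2)) + b (p+2) +
            ∑ k ∈ Finset.Icc 1 (p + 2 - 1), a (k+1) * b (p + 2 - k)) := by
      set a' : ℕ → K := fun k => if k = p+2 then a (p+3) + b (p+3) - b (p+2) else a (k+1) with ha'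
      have hkey := ih a' b
      have h1 : a' (p+2) = a (p+3) + b (p+3) - b (p+2) := by simp [ha']
      have h2 : ∑ k ∈ Finset.Icc 1 (p + 2 - 1), a' k * b (p + 2 - k)
          = ∑ k ∈ Finset.Icc 1 (p + 2 - 1), a (k+1) * b (p + 2 - k) := by
        refine Finset.sum_congr rfl fun k hk => ?_
        rw [Finset.mem_Icc] at hk
        simp [ha', show k ≠ p + 2 by omega]
      rw [h1, h2] at hkey
      rw [← hkey]
      congr 1
      ext r c
      have hv := hv_aux p r
      simp only [Matrix.submatrix_apply, hM, Matrix.of_apply, Fin.val_succ, hv]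
      rcases Nat.eq_zero_or_pos (r : ℕ) with h0 | h0
      · rcases eq_or_ne (c:ℕ) (p+1) with hc1 | hc1
        · rw [h0, hc1]
          norm_num
          ring
        · simp [h0, hc1, show (c:ℕ)+1 ≠ p+2+1-1 by omega, show (c:ℕ) ≠ p+2-1 by omega, ha',
            show (c:ℕ)+1 ≠ p+2 by omega]
      · have hr0 : (r:ℕ) ≠ 0 := by omega
        simp only [if_neg hr0]
        rcases eq_or_ne (r:ℕ) ((c:ℕ)+1) with he | he
        · simp [hr0, he]
        · rcases eq_or_ne (c:ℕ) (p+1) with hc1 | hc1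
          · have h3 : p + 2 + 1 - ((r:ℕ)+1) = p + 2 - (r:ℕ) := by omega
            simp [hr0, he, hc1, show (r:ℕ)+1 ≠ (c:ℕ)+1+1 by omega, h3]
          · simp [hr0, he, hc1, show (r:ℕ)+1 ≠ (c:ℕ)+1+1 by omega,
              show (c:ℕ)+1 ≠ p+2+1-1 by omega, show (c:ℕ) ≠ p+2-1 by omega]
    rw [Matrix.det_succ_column_zero, Fin.sum_univ_succ, Fin.sum_univ_succ]
    have hrest : ∀ i : Fin (p+1), M i.succ.succ 0 = 0 := by
      intro i
      simp [hM, show (i:ℕ)+1+1 ≠ 0+1 by omega]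
    have h00 : M 0 0 = -a 1 := by simp [hM]
    have h10 : M 1 0 = 1 := by simp [hM]
    have hsum : ∑ k ∈ Finset.Icc 1 (p+2+1-1), a k * b (p+2+1-k)
        = a 1 * b (p+2) + ∑ k ∈ Finset.Icc 1 (p+2-1), a (k+1) * b (p+2-k) := by
      rw [← Finset.Ico_add_one_right_eq_Icc, ← Finset.Ico_add_one_right_eq_Icc, Finset.sum_Ico_eq_sum_range,
        Finset.sum_Ico_eq_sum_range]
      rw [show p+2+1-1+1-1 = p+1+1 by omega, show p+2-1+1-1 = p+1 by omega]
      rw [Finset.sum_range_succ']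
      rw [add_comm]
      congr 1
      refine Finset.sum_congr rfl fun i hi => ?_
      rw [Finset.mem_range] at hi
      congr 2
      omega
    simp only [h00, h10, hrest, Fin.succ_zero_eq_one, d0, d1, Fin.val_zero, Fin.val_succ,
      Fin.val_one, zero_mul, mul_zero, zero_add, add_zero, Finset.sum_const_zero, pow_zero]
    rw [hsum]
    ring

theorem stmt18 {K : Type*} [Field K] (n : ℕ) (hn : 2 ≤ n) (a b : ℕ → K) :
    (Matrix.of fun i j : Fin n =>
        if (i : ℕ) = 0 then
          (if (j : ℕ) = n - 1 then -a n - b n else -a ((j : ℕ) + 1))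
        else if (i : ℕ) = (j : ℕ) + 1 then (1 : K)
        else if (j : ℕ) = n - 1 then -b (n - (i : ℕ))
        else 0).det =
      (-1) ^ n * (a n + b n + ∑ k ∈ Finset.Icc 1 (n - 1), a k * b (n - k)) := by
  exact key18 n hn a b
end
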